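/- For every integer M < 1 and every p ∈ (0, 2π), the principal value integral ∫₀^{2π} e^{iMq}/(e^{ip} − e^{iq}) dq equals +π e^{i(M−1)p}. -/

import Mathlib

set_option maxHeartbeats 1000000

open Real Filter

lemma sin_ne_of_exp (t : ℝ) (h : Real.sin (t/2) ≠ 0) : Complex.exp (Complex.I * t) ≠ 1 := by
  intro hc
  apply h
  rw [Complex.exp_eq_one_iff] at hc
  obtain ⟨n, hn⟩ := hc
  rw [show (n:ℂ)*(2*↑π*Complex.I) = Complex.I*((n:ℝ)*(2*π) : ℝ) by push_cast; ring] at hn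
  have ht : t = (n:ℝ)*(2*π) := by exact_mod_cast mul_left_cancel₀ Complex.I_ne_zero hn
  rw [ht, show ((n:ℝ)*(2*π))/2 = n*π by ring]
  exact Real.sin_int_mul_pi n

lemma denom_ne (p q : ℝ) (h : Real.sin ((q-p)/2) ≠ 0) :
    Complex.exp (Complex.I*p) - Complex.exp (Complex.I*q) ≠ 0 := by
  intro hc
  apply sin_ne_of_exp (q - p) h
  rw [show Complex.I * ((q:ℝ)-(p:ℝ) : ℝ) = Complex.I*q - Complex.I*p by push_cast; ring,
    Complex.exp_sub, ← sub_eq_zero.mp hc, div_self (Complex.exp_ne_zero _)]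

lemma key_identity (N : ℕ) (s cc x T : ℂ) (hs : s ≠ 0) (hsc : cc^2 + s^2 = 1)
    (hx : x * (cc + s*Complex.I)^2 = 1) (hT : T * (x - 1) = x^N - 1) :
    x^N / (1 - (cc + s*Complex.I)^2) = 1/2 + Complex.I * (s⁻¹ * (cc * (1/2))) + x * T := by
  have h2s : (2*s : ℂ) ≠ 0 := by simpa using hs
  have hmul : (1 - (cc + s*Complex.I)^2) * (s + Complex.I*cc) = 2*s := by
    linear_combination (s - Complex.I*cc)*hsc - (2*s*cc^2+s^3+Complex.I*s^2*cc)*Complex.I_sq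
  have hne : (1 - (cc + s*Complex.I)^2) ≠ 0 := by
    intro h
    rw [h, zero_mul] at hmul
    exact h2s hmul.symm
  rw [div_eq_iff hne, show (1/2 + Complex.I*(s⁻¹*(cc*(1/2))) + x*T : ℂ)
      = (s + Complex.I*cc + 2*s*(x*T))/(2*s) from by field_simp,
    div_mul_eq_mul_div, eq_comm, div_eq_iff h2s, eq_comm]
  linear_combination (Complex.I*cc - s)*hsc + (2*s*cc^2+s^3+Complex.I*s^2*cc)*Complex.I_sq
    - 2*s*hT + 2*s*T*hx


noncomputable def Faux (M : ℤ) (p : ℝ) (N : ℕ) : ℝ → ℂ := fun t =>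
  Complex.exp (Complex.I*((M:ℂ)-1)*(p:ℂ)) *
    ((t:ℂ)/2 + Complex.I * (Real.log (Real.sin ((t-p)/2)) : ℝ)
      + ∑ k ∈ Finset.range N,
          Complex.exp (-Complex.I*((k:ℂ)+1)*((t:ℂ)-(p:ℂ))) / (-Complex.I*((k:ℂ)+1)))

noncomputable def Gaux (M : ℤ) (p : ℝ) (N : ℕ) : ℝ → ℂ := fun ε =>
  Complex.exp (Complex.I*((M:ℂ)-1)*(p:ℂ)) *
    (-(ε:ℂ) + ∑ k ∈ Finset.range N,
        (Complex.exp (Complex.I*((k:ℂ)+1)*(ε:ℂ)) / (-Complex.I*((k:ℂ)+1))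
          - Complex.exp (-Complex.I*((k:ℂ)+1)*(ε:ℂ)) / (-Complex.I*((k:ℂ)+1))))

lemma Gaux_cont (M : ℤ) (p : ℝ) (N : ℕ) : Continuous (Gaux M p N) := by
  unfold Gaux
  fun_prop

lemma Gaux_zero (M : ℤ) (p : ℝ) (N : ℕ) : Gaux M p N 0 = 0 := by
  simp [Gaux]

lemma FG (M : ℤ) (p : ℝ) (N : ℕ) (ε : ℝ) :
    Faux M p N (p-ε) - Faux M p N (p+ε) = Gaux M p N ε := by
  unfold Faux Gaux
  have hlog : Real.log (Real.sin ((p-ε-p)/2)) = Real.log (Real.sin ((p+ε-p)/2)) := by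
    rw [show (p-ε-p)/2 = -((p+ε-p)/2) by ring, Real.sin_neg, Real.log_neg_eq_log]
  have e1 : ∀ k:ℕ, (-Complex.I*((k:ℂ)+1)*((((p-ε):ℝ):ℂ)-(p:ℂ))) = Complex.I*((k:ℂ)+1)*(ε:ℂ) := by
    intro k; push_cast; ring
  have e2 : ∀ k:ℕ, (-Complex.I*((k:ℂ)+1)*((((p+ε):ℝ):ℂ)-(p:ℂ))) = -Complex.I*((k:ℂ)+1)*(ε:ℂ) := by
    intro k; push_cast; ring
  simp only [e1, e2, hlog, Finset.sum_sub_distrib]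
  push_cast
  ring

lemma F2pi (M : ℤ) (p : ℝ) (N : ℕ) :
    Faux M p N (2*π) - Faux M p N 0 = (π:ℂ) * Complex.exp (Complex.I*((M:ℂ)-1)*(p:ℂ)) := by
  unfold Faux
  have hlog1 : Real.log (Real.sin ((2*π-p)/2)) = Real.log (Real.sin ((0-p)/2)) := by
    rw [show (2*π-p)/2 = π - p/2 by ring, Real.sin_pi_sub,
      show ((0:ℝ)-p)/2 = -(p/2) by ring, Real.sin_neg, Real.log_neg_eq_log]
  have e1 : ∀ k:ℕ, Complex.exp (-Complex.I*((k:ℂ)+1)*((((2*π:ℝ)):ℂ)-(p:ℂ)))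
      = Complex.exp (-Complex.I*((k:ℂ)+1)*((((0:ℝ)):ℂ)-(p:ℂ))) := by
    intro k
    rw [show -Complex.I*((k:ℂ)+1)*(((2*π:ℝ):ℂ)-(p:ℂ))
        = -Complex.I*((k:ℂ)+1)*(((0:ℝ):ℂ)-(p:ℂ)) + ((-((k:ℤ)+1) : ℤ) : ℂ)*(2*π*Complex.I) by push_cast; ring,
      Complex.exp_add, Complex.exp_int_mul_two_pi_mul_I, mul_one]
  simp only [e1, hlog1]
  push_cast
  ring

lemma Fderiv (M : ℤ) (p : ℝ) (N : ℕ) (hN : (M:ℂ) = -(N:ℂ)) (q : ℝ)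
    (h : Real.sin ((q-p)/2) ≠ 0) :
    HasDerivAt (Faux M p N)
      (Complex.exp (Complex.I*M*q) / (Complex.exp (Complex.I*p) - Complex.exp (Complex.I*q))) q := by
  unfold Faux
  set c : ℂ := Complex.exp (Complex.I*((M:ℂ)-1)*p) with hc
  have h1 : HasDerivAt (fun t : ℝ => ((t:ℂ)/2)) (1/2) q := by
    simpa using (Complex.ofRealCLM.hasDerivAt (x := q)).div_const 2
  have hin : HasDerivAt (fun t : ℝ => (t-p)/2) (1/2) q :=
    ((hasDerivAt_id q).sub_const p).div_const 2
  have hsin : HasDerivAt (fun t : ℝ => Real.sin ((t-p)/2)) (Real.cos ((q-p)/2) * (1/2)) q :=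
    (Real.hasDerivAt_sin _).comp q hin
  have hlog : HasDerivAt (fun t : ℝ => Real.log (Real.sin ((t-p)/2)))
      ((Real.sin ((q-p)/2))⁻¹ * (Real.cos ((q-p)/2) * (1/2))) q := by
    exact (Real.hasDerivAt_log h).comp q hsin
  have hlogC : HasDerivAt (fun t : ℝ => (Complex.I * (Real.log (Real.sin ((t-p)/2)) : ℝ)))
      (Complex.I * (((Real.sin ((q-p)/2))⁻¹ * (Real.cos ((q-p)/2) * (1/2)) : ℝ) : ℂ)) q :=
    hlog.ofReal_comp.const_mul Complex.I
  have hsum : HasDerivAt (fun t : ℝ => ∑ k ∈ Finset.range N,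
        Complex.exp (-Complex.I*((k:ℂ)+1)*((t:ℂ)-(p:ℂ))) / (-Complex.I*((k:ℂ)+1)))
      (∑ k ∈ Finset.range N, Complex.exp (-Complex.I*((k:ℂ)+1)*(((q:ℝ):ℂ)-(p:ℂ)))) q := by
    apply HasDerivAt.fun_sum
    intro k _
    have hk1 : (-Complex.I*((k:ℂ)+1)) ≠ 0 :=
      mul_ne_zero (neg_ne_zero.mpr Complex.I_ne_zero) (Nat.cast_add_one_ne_zero k)
    have hz1 : HasDerivAt (fun z : ℂ => -Complex.I*((k:ℂ)+1)*(z-(p:ℂ))) (-Complex.I*((k:ℂ)+1)*1) ((q:ℝ):ℂ) :=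
      ((hasDerivAt_id ((q:ℝ):ℂ)).sub_const (p:ℂ)).const_mul (-Complex.I*((k:ℂ)+1))
    have hz2 := hz1.cexp
    have hz3 := hz2.div_const (-Complex.I*((k:ℂ)+1))
    have hz := hz3.comp_ofReal
    rw [mul_one] at hz
    have := hz
    rw [mul_div_assoc, div_self hk1, mul_one] at this
    exact this
  have hAll := ((h1.add hlogC).add hsum).const_mul c
  refine hAll.congr_deriv (Eq.symm ?_)
  -- now the algebraic identity
  set s : ℝ := Real.sin ((q-p)/2) with hs_def
  set cr : ℝ := Real.cos ((q-p)/2) with hcr_def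
  set x : ℂ := Complex.exp (-Complex.I*(((q:ℝ):ℂ)-(p:ℂ))) with hx_def
  set w : ℂ := Complex.exp (Complex.I*(((q:ℝ):ℂ)-(p:ℂ))) with hw_def
  set T : ℂ := ∑ k ∈ Finset.range N, x^k with hT_def
  have hsum_eq : (∑ k ∈ Finset.range N,
      Complex.exp (-Complex.I*((k:ℂ)+1)*(((q:ℝ):ℂ)-(p:ℂ)))) = x * T := by
    rw [hT_def, Finset.mul_sum]
    apply Finset.sum_congr rfl
    intro k _
    rw [show -Complex.I*((k:ℂ)+1)*(((q:ℝ):ℂ)-(p:ℂ))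
        = ((k+1 : ℕ):ℂ) * (-Complex.I*(((q:ℝ):ℂ)-(p:ℂ))) by push_cast; ring,
      Complex.exp_nat_mul, ← hx_def, pow_succ']
  have hb : Complex.exp (Complex.I*(p:ℂ)) - Complex.exp (Complex.I*(q:ℂ))
      = Complex.exp (Complex.I*(p:ℂ)) * (1 - w) := by
    rw [mul_sub, mul_one, hw_def, ← Complex.exp_add]
    congr 2
    push_cast; ring
  have hnum : Complex.exp (Complex.I*(M:ℂ)*(q:ℂ)) = c * Complex.exp (Complex.I*(p:ℂ)) * x^N := by
    rw [hx_def, ← Complex.exp_nat_mul, hc, ← Complex.exp_add, ← Complex.exp_add]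
    congr 1
    have hNM : (N:ℂ) = -(M:ℂ) := by rw [hN]; ring
    rw [hNM]; push_cast; ring
  have hw_sq : w = ((cr:ℂ) + (s:ℂ)*Complex.I)^2 := by
    have hhalf : Complex.exp (Complex.I*(((q:ℝ):ℂ)-(p:ℂ)))
        = Complex.exp (((((q-p)/2 : ℝ)):ℂ) * Complex.I) * Complex.exp (((((q-p)/2 : ℝ)):ℂ) * Complex.I) := by
      rw [← Complex.exp_add]; congr 1; push_cast; ring
    rw [hw_def, hhalf, Complex.exp_mul_I, hs_def, hcr_def, ← Complex.ofReal_cos, ← Complex.ofReal_sin]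
    ring
  have hxw : x * w = 1 := by
    rw [hx_def, hw_def, ← Complex.exp_add, show -Complex.I*(((q:ℝ):ℂ)-(p:ℂ)) + Complex.I*(((q:ℝ):ℂ)-(p:ℂ)) = 0 by ring, Complex.exp_zero]
  have hgeom : T * (x - 1) = x^N - 1 := geom_sum_mul x N
  have hsC : (s:ℂ) ≠ 0 := by exact_mod_cast h
  have hscC : (cr:ℂ)^2 + (s:ℂ)^2 = 1 := by
    exact_mod_cast Real.cos_sq_add_sin_sq ((q-p)/2)
  rw [hb, hnum, hsum_eq, show c * Complex.exp (Complex.I*(p:ℂ)) * x^N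
      = Complex.exp (Complex.I*(p:ℂ)) * (c * x^N) by ring,
    mul_div_mul_left _ _ (Complex.exp_ne_zero _), mul_div_assoc]
  congr 1
  rw [hw_sq] at hxw ⊢
  push_cast
  exact key_identity N (s:ℂ) (cr:ℂ) x T hsC hscC hxw hgeom

/-- For integer M < 1 and p ∈ (0, 2π), the principal value integral
∫₀^{2π} e^{iMq}/(e^{ip} − e^{iq}) dq equals +π e^{i(M−1)p}. -/
theorem pv_integral_neg_M (M : ℤ) (hM : M < 1) (p : ℝ) (hp : p ∈ Set.Ioo 0 (2 * π)) :
    Tendsto (fun ε : ℝ =>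
        (∫ q in (0:ℝ)..(p - ε),
          Complex.exp (Complex.I * M * q) /
            (Complex.exp (Complex.I * p) - Complex.exp (Complex.I * q))) +
        ∫ q in (p + ε)..(2 * π),
          Complex.exp (Complex.I * M * q) /
            (Complex.exp (Complex.I * p) - Complex.exp (Complex.I * q)))
      (nhdsWithin 0 (Set.Ioi 0))
      (nhds ((π : ℂ) * Complex.exp (Complex.I * (M - 1) * p))) := by
  obtain ⟨hp0, hp2⟩ := hp
  have hpi := Real.pi_pos
  set N : ℕ := (-M).toNat with hNdef
  have hN : (M:ℂ) = -(N:ℂ) := by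
    have h1 : ((-M).toNat : ℤ) = -M := Int.toNat_of_nonneg (by omega)
    have h2 : (M:ℤ) = -((N:ℤ)) := by rw [hNdef, h1]; ring
    exact_mod_cast congrArg (fun z : ℤ => (z : ℂ)) h2
  set F := Faux M p N with hF
  set f : ℝ → ℂ := fun q => Complex.exp (Complex.I * M * q) /
      (Complex.exp (Complex.I * p) - Complex.exp (Complex.I * q)) with hf
  have hδ : (0:ℝ) < min p (2*π - p) := lt_min hp0 (by linarith)
  have hsin1 : ∀ ε ∈ Set.Ioo (0:ℝ) (min p (2*π-p)), ∀ x ∈ Set.uIcc 0 (p-ε),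
      Real.sin ((x-p)/2) ≠ 0 := by
    intro ε hε x hx
    obtain ⟨hε0, hεlt⟩ := hε
    have hεp : ε < p := lt_of_lt_of_le hεlt (min_le_left _ _)
    rw [Set.uIcc_of_le (by linarith)] at hx
    obtain ⟨hx0, hx1⟩ := hx
    have : Real.sin ((x-p)/2) < 0 :=
      Real.sin_neg_of_neg_of_neg_pi_lt (by linarith) (by linarith)
    linarith
  have hsin2 : ∀ ε ∈ Set.Ioo (0:ℝ) (min p (2*π-p)), ∀ x ∈ Set.uIcc (p+ε) (2*π),
      Real.sin ((x-p)/2) ≠ 0 := by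
    intro ε hε x hx
    obtain ⟨hε0, hεlt⟩ := hε
    have hεq : ε < 2*π - p := lt_of_lt_of_le hεlt (min_le_right _ _)
    rw [Set.uIcc_of_le (by linarith)] at hx
    obtain ⟨hx0, hx1⟩ := hx
    have : 0 < Real.sin ((x-p)/2) :=
      Real.sin_pos_of_pos_of_lt_pi (by linarith) (by linarith)
    linarith
  have hint : ∀ a b : ℝ, (∀ x ∈ Set.uIcc a b, Real.sin ((x-p)/2) ≠ 0) →
      IntervalIntegrable f MeasureTheory.volume a b := by
    intro a b hab
    apply ContinuousOn.intervalIntegrable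
    apply ContinuousOn.div
    · fun_prop
    · fun_prop
    · intro x hx
      exact denom_ne p x (hab x hx)
  have heq : (fun ε : ℝ => (∫ q in (0:ℝ)..(p - ε), f q) + ∫ q in (p + ε)..(2*π), f q)
      =ᶠ[nhdsWithin 0 (Set.Ioi 0)]
      (fun ε => (F (2*π) - F 0) + (F (p-ε) - F (p+ε))) := by
    filter_upwards [Ioo_mem_nhdsGT_of_mem (Set.left_mem_Ico.mpr hδ)] with ε hε
    have h1 : (∫ q in (0:ℝ)..(p - ε), f q) = F (p-ε) - F 0 :=
      intervalIntegral.integral_eq_sub_of_hasDerivAt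
        (fun x hx => Fderiv M p N hN x (hsin1 ε hε x hx)) (hint _ _ (hsin1 ε hε))
    have h2 : (∫ q in (p+ε)..(2*π), f q) = F (2*π) - F (p+ε) :=
      intervalIntegral.integral_eq_sub_of_hasDerivAt
        (fun x hx => Fderiv M p N hN x (hsin2 ε hε x hx)) (hint _ _ (hsin2 ε hε))
    rw [h1, h2]; ring
  rw [show (fun ε : ℝ =>
        (∫ q in (0:ℝ)..(p - ε),
          Complex.exp (Complex.I * M * q) /
            (Complex.exp (Complex.I * p) - Complex.exp (Complex.I * q))) +
        ∫ q in (p + ε)..(2 * π),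
          Complex.exp (Complex.I * M * q) /
            (Complex.exp (Complex.I * p) - Complex.exp (Complex.I * q)))
      = (fun ε : ℝ => (∫ q in (0:ℝ)..(p - ε), f q) + ∫ q in (p + ε)..(2*π), f q) from rfl,
    tendsto_congr' heq]
  simp only [hF, FG M p N, F2pi M p N]
  have hG : Tendsto (fun ε : ℝ => Gaux M p N ε) (nhdsWithin 0 (Set.Ioi 0)) (nhds 0) := by
    have := ((Gaux_cont M p N).tendsto 0).mono_left
      (nhdsWithin_le_nhds (s := Set.Ioi (0:ℝ)))
    rwa [Gaux_zero] at this
  simpa using tendsto_const_nhds.add hG
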